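/- Let c be a real number with c > 1 and let h : ℂ → ℂ be holomorphic on ℂ \ {0} with h(c·z) = h(z) for all z ∈ ℂ \ {0}. Then h is constant on ℂ \ {0}, i.e. h(z) = h(w) for all nonzero z, w ∈ ℂ. (This is the Laurent-series comparison step in the proof of Theorem 4.2: a function holomorphic on the punctured plane and invariant under multiplication by c > 1 has all Laurent coefficients aₙ with n ≠ 0 equal to zero.) -/

import Mathlib

/-- Laurent-series step in the proof of Theorem 4.2: a function holomorphic on
the punctured plane which is invariant under multiplication by a real `c > 1`
is constant on the punctured plane. -/
theorem invariant_on_punctured_plane_is_constant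
    (c : ℝ) (hc : 1 < c) (h : ℂ → ℂ)
    (hh : DifferentiableOn ℂ h {z : ℂ | z ≠ 0})
    (hinv : ∀ z : ℂ, z ≠ 0 → h ((c : ℂ) * z) = h z) :
    ∀ z w : ℂ, z ≠ 0 → w ≠ 0 → h z = h w := by
  have hc0 : (0:ℝ) < c := lt_trans one_pos hc
  have hcz : (c : ℂ) ≠ 0 := by exact_mod_cast hc0.ne'
  -- invariance under integer powers of c
  have hzpow : ∀ n : ℤ, ∀ z : ℂ, z ≠ 0 → h ((c : ℂ) ^ n * z) = h z := by
    intro n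
    induction n using Int.induction_on with
    | zero => intro z hz; simp
    | succ n ih =>
      intro z hz
      have h1 : ((c:ℂ) ^ ((n:ℤ)+1) * z) = (c:ℂ) * ((c:ℂ) ^ (n:ℤ) * z) := by
        rw [zpow_add_one₀ hcz]; ring
      rw [h1, hinv _ (mul_ne_zero (zpow_ne_zero _ hcz) hz), ih z hz]
    | pred n ih =>
      intro z hz
      have h1 : ((c:ℂ) ^ (-(n:ℤ)) * z) = (c:ℂ) * ((c:ℂ) ^ (-(n:ℤ)-1) * z) := by
        rw [show -(n:ℤ) = (-(n:ℤ)-1) + 1 by ring, zpow_add_one₀ hcz]; ring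
      have := hinv ((c:ℂ) ^ (-(n:ℤ)-1) * z) (mul_ne_zero (zpow_ne_zero _ hcz) hz)
      rw [← h1] at this
      rw [← this, ih z hz]
  -- bound on compact annulus
  set K : Set ℂ := {z : ℂ | 1 ≤ ‖z‖ ∧ ‖z‖ ≤ c}
  have hKc : IsCompact K := by
    have : K = (Metric.closedBall (0:ℂ) c) ∩ {z : ℂ | 1 ≤ ‖z‖} := by
      ext z; simp [K, Metric.mem_closedBall, Complex.dist_eq, and_comm]
    rw [this]
    exact (isCompact_closedBall _ _).inter_right
      (isClosed_le continuous_const continuous_norm)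
  have hKsub : K ⊆ {z : ℂ | z ≠ 0} := by
    intro z hz
    rcases hz with ⟨h1, _⟩
    intro h0
    rw [h0] at h1; norm_num at h1
  obtain ⟨M, hM⟩ := hKc.exists_bound_of_continuousOn (hh.continuousOn.mono hKsub)
  -- global bound
  have hbound : ∀ z : ℂ, z ≠ 0 → ‖h z‖ ≤ M := by
    intro z hz
    have hnz : (0:ℝ) < ‖z‖ := norm_pos_iff.mpr hz
    obtain ⟨n, hn⟩ := exists_mem_Ico_zpow hnz hc
    set w : ℂ := z / (c:ℂ) ^ n with hw
    have hwne : w ≠ 0 := div_ne_zero hz (zpow_ne_zero _ hcz)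
    have hwn : ‖w‖ = ‖z‖ / c ^ n := by
      rw [hw, norm_div, norm_zpow, Complex.norm_real, Real.norm_of_nonneg hc0.le]
    have hcn : (0:ℝ) < c ^ n := zpow_pos hc0 n
    have hwK : w ∈ K := by
      constructor
      · rw [hwn]; rw [le_div_iff₀ hcn, one_mul]; exact hn.1
      · rw [hwn, div_le_iff₀ hcn]
        have : c ^ (n+1) = c * c ^ n := by rw [zpow_add_one₀ hc0.ne']; ring
        linarith [hn.2, this ▸ hn.2]
    have : h z = h w := by
      have := hzpow n w hwne
      rw [hw] at this ⊢
      rw [mul_div_cancel₀ z (zpow_ne_zero n hcz)] at this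
      exact this
    rw [this]
    exact hM w hwK
  -- compose with exp: entire bounded function
  have hdiff : Differentiable ℂ (h ∘ Complex.exp) := by
    intro x
    have hx : Complex.exp x ≠ 0 := Complex.exp_ne_zero x
    have : DifferentiableAt ℂ h (Complex.exp x) :=
      hh.differentiableAt (isOpen_compl_singleton.mem_nhds hx)
    exact this.comp x (Complex.differentiable_exp x)
  have hbdd : Bornology.IsBounded (Set.range (h ∘ Complex.exp)) := by
    apply isBounded_iff_forall_norm_le.mpr
    refine ⟨M, ?_⟩
    rintro _ ⟨x, rfl⟩
    exact hbound _ (Complex.exp_ne_zero x)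
  intro z w hz hw
  obtain ⟨a, ha⟩ : z ∈ Set.range Complex.exp := by rw [Complex.range_exp]; exact hz
  obtain ⟨b, hb⟩ : w ∈ Set.range Complex.exp := by rw [Complex.range_exp]; exact hw
  rw [← ha, ← hb]
  exact hdiff.apply_eq_apply_of_bounded hbdd a b
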